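/- Let L be a levellised n-poset with dep(n−1) = k, m ≥ 1, and A_n,…,A_{n+m−1} ⊆ L \ {0}. The poset L̃ obtained by adding m new atoms n,…,n+m−1 with covering sets A_n,…,A_{n+m−1} is levellised with dep_{L̃}(a) = dep_L(a) ≤ k for 1 ≤ a < n and dep_{L̃}(i) = k+1 for all new elements i, if and only if every A_i meets the k-th level of L. -/

import Mathlib

namespace PaperLattice

variable {N : ℕ}

/-- Depth: one less than the maximum length of a chain from `t` down to `a` w.r.t. `le`. -/
noncomputable def dep (le : Fin N → Fin N → Prop) (t a : Fin N) : ℕ :=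
  sSup {k | ∃ l : List (Fin N), List.Chain' (fun x y => le y x ∧ y ≠ x) l ∧
    l.head? = some t ∧ l.getLast? = some a ∧ l.length = k + 1}

/-- The `d`-th level: elements of depth `d`. -/
noncomputable def lev (le : Fin N → Fin N → Prop) (t : Fin N) (d : ℕ) : Set (Fin N) :=
  {a | dep le t a = d}

/-- A labelled poset is levellised if depth is monotone in the nonzero labels. -/
def Levellised (le : Fin N → Fin N → Prop) (t : Fin N) : Prop :=
  ∀ i j : Fin N, 0 < (i : ℕ) → (i : ℕ) ≤ (j : ℕ) → dep le t i ≤ dep le t j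

def lt' (le : Fin N → Fin N → Prop) (a b : Fin N) : Prop := le a b ∧ a ≠ b

/-- `b` covers `a`. -/
def CovByRel (le : Fin N → Fin N → Prop) (a b : Fin N) : Prop :=
  lt' le a b ∧ ∀ x, lt' le a x → lt' le x b → False

/-- The covering set of `a`. -/
def cov (le : Fin N → Fin N → Prop) (a : Fin N) : Set (Fin N) := {b | CovByRel le a b}

/-- The up-set of `A`. -/
def upset (le : Fin N → Fin N → Prop) (A : Set (Fin N)) : Set (Fin N) :=
  {x | ∃ a ∈ A, le a x}

def AntichainRel (le : Fin N → Fin N → Prop) (A : Set (Fin N)) : Prop :=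
  ∀ a ∈ A, ∀ b ∈ A, a ≠ b → ¬ le a b

/-- Binary weight of a set of labels. -/
noncomputable def wt (A : Set (Fin N)) : ℕ :=
  ∑ j : Fin N, A.indicator (fun j => 2 ^ (j : ℕ)) j

/-- `z` is a bottom and `o` a top for `le`. -/
def Bounds (le : Fin N → Fin N → Prop) (z o : Fin N) : Prop :=
  (∀ a, le z a) ∧ (∀ a, le a o)

/-- The order obtained from `le` by adding `m` new atoms, the `i`-th having covering set `A i`. -/
def extLe {n m : ℕ} (le : Fin n → Fin n → Prop) (A : Fin m → Set (Fin n)) :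
    Fin (n + m) → Fin (n + m) → Prop := fun x y =>
  if hx : (x : ℕ) < n then
    if hy : (y : ℕ) < n then le ⟨x, hx⟩ ⟨y, hy⟩
    else (x : ℕ) = 0
  else
    if hy : (y : ℕ) < n then
      (⟨y, hy⟩ : Fin n) ∈ upset le (A ⟨(x : ℕ) - n, by have := x.isLt; omega⟩)
    else x = y

/-- The relabelled order `π(L)`. -/
def permLe {n : ℕ} (π : Equiv.Perm (Fin n)) (le : Fin n → Fin n → Prop) :
    Fin n → Fin n → Prop := fun a b => le (π.symm a) (π.symm b)



section Aux
variable {α : Type*} {R : α → α → Prop}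

private lemma rev_trans (htrans : ∀ a b c, R a b → R b c → R a c)
    (hanti : ∀ a b, R a b → R b a → a = b) :
    Transitive (fun x y => R y x ∧ y ≠ x) := by
  rintro x y z ⟨h1, n1⟩ ⟨h2, n2⟩
  refine ⟨htrans _ _ _ h2 h1, fun e => n1 ?_⟩
  subst e
  exact (hanti _ _ h2 h1).symm

private lemma rel_getLast (hrefl : ∀ a, R a a) (htrans : ∀ a b c, R a b → R b c → R a c) :
    ∀ (l : List α), List.Chain' (fun x y => R y x ∧ y ≠ x) l →
      ∀ b, l.getLast? = some b → ∀ x ∈ l, R b x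
  | [], _, b, hb => by simp at hb
  | [c], _, b, hb => by
      simp at hb; subst hb; intro x hx; simp at hx; subst hx; exact hrefl _
  | c :: d :: l, hch, b, hb => by
      rw [List.getLast?_cons_cons] at hb
      rw [List.Chain', List.isChain_cons_cons] at hch
      intro x hx
      rcases List.mem_cons.1 hx with rfl | hx
      · have hd := rel_getLast hrefl htrans (d :: l) hch.2 b hb d List.mem_cons_self
        exact htrans _ _ _ hd hch.1.1
      · exact rel_getLast hrefl htrans (d :: l) hch.2 b hb x hx

private lemma chain'_map_of_chain' {β : Type*} {S : β → β → Prop} (f : α → β) :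
    ∀ {l : List α}, List.Chain' R l → (∀ x ∈ l, ∀ y ∈ l, R x y → S (f x) (f y)) →
      List.Chain' S (List.map f l)
  | [], _, _ => by simp [List.Chain']
  | [a], _, _ => by simp [List.Chain']
  | a :: b :: l, hch, h => by
      rw [List.Chain', List.isChain_cons_cons] at hch
      simp only [List.map_cons, List.Chain', List.isChain_cons_cons] at *
      refine ⟨h a (by simp) b (by simp) hch.1, ?_⟩
      have := chain'_map_of_chain' f (l := b :: l) hch.2
        (fun x hx y hy hr => h x (List.mem_cons_of_mem _ hx) y (List.mem_cons_of_mem _ hy) hr)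
      simpa [List.Chain'] using this

end Aux

/-- The set whose sSup is `dep`. -/
def depSet (le : Fin N → Fin N → Prop) (t a : Fin N) : Set ℕ :=
  {k | ∃ l : List (Fin N), List.Chain' (fun x y => le y x ∧ y ≠ x) l ∧
    l.head? = some t ∧ l.getLast? = some a ∧ l.length = k + 1}

lemma dep_eq_sSup (le : Fin N → Fin N → Prop) (t a : Fin N) :
    dep le t a = sSup (depSet le t a) := rfl

lemma depSet_bddAbove (le : Fin N → Fin N → Prop)
    (htrans : ∀ a b c, le a b → le b c → le a c)
    (hanti : ∀ a b, le a b → le b a → a = b) (t a : Fin N) :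
    BddAbove (depSet le t a) := by
  refine ⟨N, fun k hk => ?_⟩
  obtain ⟨l, hch, -, -, hlen⟩ := hk
  have ht : Transitive (fun x y : Fin N => le y x ∧ y ≠ x) := rev_trans htrans hanti
  haveI : IsTrans (Fin N) (fun x y : Fin N => le y x ∧ y ≠ x) :=
    { trans := fun a b c h h' => ht h h' }
  have hpw : l.Pairwise (fun x y => le y x ∧ y ≠ x) := List.isChain_iff_pairwise.1 hch
  have hnd : l.Nodup := hpw.imp (fun h => (h.2).symm)
  have := hnd.length_le_card
  simp only [Fintype.card_fin] at this
  omega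

/-- Depth is antitone. -/
lemma dep_mono (le : Fin N → Fin N → Prop)
    (htrans : ∀ a b c, le a b → le b c → le a c)
    (hanti : ∀ a b, le a b → le b a → a = b) {t x y : Fin N} (hxy : le x y) :
    dep le t y ≤ dep le t x := by
  rw [dep_eq_sSup, dep_eq_sSup]
  refine csSup_le' (fun d hd => ?_)
  obtain ⟨l, hch, hhd, hlast, hlen⟩ := hd
  by_cases hxy' : x = y
  · subst hxy'
    exact le_csSup (depSet_bddAbove le htrans hanti t x) ⟨l, hch, hhd, hlast, hlen⟩
  · refine le_trans (Nat.le_succ d) (le_csSup (depSet_bddAbove le htrans hanti t x) ?_)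
    have hlne : l ≠ [] := by rintro rfl; simp at hlast
    refine ⟨l ++ [x], ?_, ?_, ?_, ?_⟩
    · rw [List.Chain', List.isChain_append]
      refine ⟨hch, List.isChain_singleton x, ?_⟩
      intro p hp q hq
      simp only [List.head?_cons, Option.mem_def, Option.some.injEq] at hq
      subst hq
      rw [hlast] at hp
      simp only [Option.mem_def, Option.some.injEq] at hp
      subst hp
      exact ⟨hxy, hxy'⟩
    · rw [List.head?_append, hhd]; rfl
    · rw [List.getLast?_concat]
    · simp [hlen]

/-- depSet is nonempty when `a ≤ t`. -/
lemma depSet_nonempty (le : Fin N → Fin N → Prop) {t a : Fin N} (hat : le a t)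
    (hrefl : ∀ a, le a a) :
    (depSet le t a).Nonempty := by
  by_cases h : a = t
  · subst h
    exact ⟨0, [a], by simp [List.Chain'], by simp, by simp, by simp⟩
  · exact ⟨1, [t, a], by simp [List.Chain', List.isChain_pair]; exact ⟨hat, h⟩, by simp, by simp, by simp⟩


section Ext

variable {n m : ℕ} {le : Fin n → Fin n → Prop} {A : Fin m → Set (Fin n)}

lemma extLe_refl (hrefl : ∀ a, le a a) : ∀ x, extLe le A x x := by
  intro x
  unfold extLe
  by_cases hx : (x : ℕ) < n <;> simp [hx, hrefl]

lemma extLe_trans (hn : 2 ≤ n) (hpo : IsPartialOrder (Fin n) le)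
    (hb : Bounds le ⟨0, by omega⟩ ⟨1, by omega⟩)
    (hA0 : ∀ i, ∀ a ∈ A i, a ≠ ⟨0, by omega⟩) :
    ∀ x y z, extLe le A x y → extLe le A y z → extLe le A x z := by
  have htr : ∀ a b c : Fin n, le a b → le b c → le a c :=
    fun a b c => hpo.toIsPreorder.toIsTrans.trans a b c
  have has : ∀ a b : Fin n, le a b → le b a → a = b :=
    fun a b => hpo.toAntisymm.antisymm a b
  intro x y z hxy hyz
  unfold extLe at *
  by_cases hx : (x : ℕ) < n <;> by_cases hy : (y : ℕ) < n <;> by_cases hz : (z : ℕ) < n <;>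
      simp only [hx, hy, hz, dite_true, dite_false, dif_pos, dif_neg, not_false_iff] at hxy hyz ⊢
  · exact htr _ _ _ hxy hyz
  · have he : (⟨(y : ℕ), hy⟩ : Fin n) = ⟨0, by omega⟩ := by simp [Fin.ext_iff, hyz]
    rw [he] at hxy
    have := has _ _ hxy (hb.1 _)
    simpa [Fin.ext_iff] using this
  · have he : (⟨(x : ℕ), hx⟩ : Fin n) = ⟨0, by omega⟩ := by simp [Fin.ext_iff, hxy]
    rw [he]
    exact hb.1 _
  · exact hxy
  · obtain ⟨a, ha, hay⟩ := hxy
    exact ⟨a, ha, htr _ _ _ hay hyz⟩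
  · obtain ⟨a, ha, hay⟩ := hxy
    have he : (⟨(y : ℕ), hy⟩ : Fin n) = ⟨0, by omega⟩ := by simp [Fin.ext_iff, hyz]
    rw [he] at hay
    exact absurd (has _ _ hay (hb.1 _)) (hA0 _ _ ha)
  · subst hxy
    exact hyz
  · exact hxy.trans hyz

lemma extLe_antisymm (hn : 2 ≤ n) (hpo : IsPartialOrder (Fin n) le)
    (hb : Bounds le ⟨0, by omega⟩ ⟨1, by omega⟩)
    (hA0 : ∀ i, ∀ a ∈ A i, a ≠ ⟨0, by omega⟩) :
    ∀ x y, extLe le A x y → extLe le A y x → x = y := by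
  have has : ∀ a b : Fin n, le a b → le b a → a = b :=
    fun a b => hpo.toAntisymm.antisymm a b
  intro x y hxy hyx
  unfold extLe at *
  by_cases hx : (x : ℕ) < n <;> by_cases hy : (y : ℕ) < n <;>
      simp only [hx, hy, dite_true, dite_false, dif_pos, dif_neg, not_false_iff] at hxy hyx ⊢
  · have := has _ _ hxy hyx
    apply Fin.ext
    simpa [Fin.ext_iff] using this
  · obtain ⟨a, ha, hax⟩ := hyx
    have he : (⟨(x : ℕ), hx⟩ : Fin n) = ⟨0, by omega⟩ := by simp [Fin.ext_iff, hxy]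
    rw [he] at hax
    exact absurd (has _ _ hax (hb.1 _)) (hA0 _ _ ha)
  · obtain ⟨a, ha, hay⟩ := hxy
    have he : (⟨(y : ℕ), hy⟩ : Fin n) = ⟨0, by omega⟩ := by simp [Fin.ext_iff, hyx]
    rw [he] at hay
    exact absurd (has _ _ hay (hb.1 _)) (hA0 _ _ ha)
  · exact hxy

lemma extLe_castAdd_iff (x y : Fin n) :
    extLe le A (x.castAdd m) (y.castAdd m) ↔ le x y := by
  simp [extLe, x.is_lt, y.is_lt]

lemma depSet_castAdd (hn : 2 ≤ n) (hpo : IsPartialOrder (Fin n) le)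
    (hb : Bounds le ⟨0, by omega⟩ ⟨1, by omega⟩)
    (hA0 : ∀ i, ∀ a ∈ A i, a ≠ ⟨0, by omega⟩)
    (a : Fin n) (ha : 1 ≤ (a : ℕ)) :
    depSet (extLe le A) ⟨1, by omega⟩ (a.castAdd m) = depSet le ⟨1, by omega⟩ a := by
  have hrefl : ∀ b : Fin n, le b b := fun b => hpo.toIsPreorder.toRefl.refl b
  have htr := extLe_trans (A := A) hn hpo hb hA0
  have hre := extLe_refl (A := A) hrefl
  ext d
  constructor
  · rintro ⟨l, hch, hhd, hlast, hlen⟩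
    have hall : ∀ x ∈ l, (x : ℕ) < n := by
      intro x hx
      have hax := rel_getLast hre htr l hch _ hlast x hx
      by_contra hxn
      have h0 : ((a.castAdd m : Fin (n + m)) : ℕ) = 0 := by
        simpa [extLe, a.is_lt, hxn] using hax
      simp at h0
      omega
    refine ⟨l.map (fun x : Fin (n + m) => if h : (x : ℕ) < n then (⟨x, h⟩ : Fin n) else ⟨0, by omega⟩),
      ?_, ?_, ?_, ?_⟩
    · refine chain'_map_of_chain' _ hch ?_
      intro x hx y hy hr
      have hxo := hall x hx
      have hyo := hall y hy
      simp only [hxo, hyo, dif_pos]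
      constructor
      · have h1 := hr.1
        simpa [extLe, hxo, hyo] using h1
      · intro e
        apply hr.2
        apply Fin.ext
        simpa [Fin.ext_iff] using e
    · rw [List.head?_map, hhd]
      simp [show (1 : ℕ) < n by omega]
    · rw [List.getLast?_map, hlast]
      simp [a.is_lt]
    · simpa using hlen
  · rintro ⟨l, hch, hhd, hlast, hlen⟩
    refine ⟨l.map (Fin.castAdd m), ?_, ?_, ?_, ?_⟩
    · refine chain'_map_of_chain' _ hch ?_
      intro x _ y _ hr
      refine ⟨(extLe_castAdd_iff y x).2 hr.1, fun e => hr.2 (Fin.ext (by simpa [Fin.ext_iff] using e))⟩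
    · rw [List.head?_map, hhd]; rfl
    · rw [List.getLast?_map, hlast]; rfl
    · simpa using hlen

lemma dep_castAdd (hn : 2 ≤ n) (hpo : IsPartialOrder (Fin n) le)
    (hb : Bounds le ⟨0, by omega⟩ ⟨1, by omega⟩)
    (hA0 : ∀ i, ∀ a ∈ A i, a ≠ ⟨0, by omega⟩)
    (a : Fin n) (ha : 1 ≤ (a : ℕ)) :
    dep (extLe le A) ⟨1, by omega⟩ (a.castAdd m) = dep le ⟨1, by omega⟩ a := by
  rw [dep_eq_sSup, dep_eq_sSup, depSet_castAdd hn hpo hb hA0 a ha]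

lemma new_chain_bound (hn : 2 ≤ n) (hpo : IsPartialOrder (Fin n) le)
    (hb : Bounds le ⟨0, by omega⟩ ⟨1, by omega⟩)
    (hA0 : ∀ i, ∀ a ∈ A i, a ≠ ⟨0, by omega⟩)
    (i : Fin m) {d : ℕ}
    (hd : d ∈ depSet (extLe le A) ⟨1, by omega⟩ (Fin.natAdd n i)) :
    ∃ a ∈ A i, 1 ≤ d ∧ d ≤ dep le ⟨1, by omega⟩ a + 1 ∧
      d - 1 ≤ dep le ⟨1, by omega⟩ a := by
  have htr : ∀ a b c : Fin n, le a b → le b c → le a c :=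
    fun a b c => hpo.toIsPreorder.toIsTrans.trans a b c
  have has : ∀ a b : Fin n, le a b → le b a → a = b :=
    fun a b => hpo.toAntisymm.antisymm a b
  obtain ⟨l, hch, hhd, hlast, hlen⟩ := hd
  have hlne : l ≠ [] := by rintro rfl; simp at hlast
  have hlast' : l.getLast hlne = Fin.natAdd n i := by
    have h := List.getLast?_eq_getLast hlne
    rw [h] at hlast
    exact Option.some.inj hlast
  have hdecomp : l.dropLast ++ [Fin.natAdd n i] = l := by
    rw [← hlast']; exact List.dropLast_append_getLast hlne
  have hlen2 : 2 ≤ l.length := by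
    rcases l with _ | ⟨c, l'⟩
    · simp at hhd
    rcases l' with _ | ⟨c', l''⟩
    · exfalso
      have h1 : c = (⟨1, by omega⟩ : Fin (n + m)) := by simpa using hhd
      have h2 : c = Fin.natAdd n i := by simpa using hlast
      rw [h1] at h2
      have := congrArg Fin.val h2
      simp [Fin.natAdd] at this
      omega
    · simp
  set l₁ := l.dropLast with hl₁
  have hl₁ne : l₁ ≠ [] := by
    have hld : l₁.length = l.length - 1 := List.length_dropLast
    intro h
    rw [h] at hld
    simp at hld
    omega
  rw [← hdecomp, List.Chain', List.isChain_append] at hch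
  obtain ⟨hch₁, -, hrel⟩ := hch
  have hl₁last : l₁.getLast? = some (l₁.getLast hl₁ne) := List.getLast?_eq_getLast _
  set b := l₁.getLast hl₁ne with hbdef
  have hrelb : extLe le A (Fin.natAdd n i) b ∧ Fin.natAdd n i ≠ b := by
    have := hrel b (by rw [hl₁last]; rfl) (Fin.natAdd n i) (by simp)
    exact this
  have hni : ¬ ((Fin.natAdd n i : Fin (n + m)) : ℕ) < n := by
    simp [Fin.natAdd]
  have hbo : (b : ℕ) < n := by
    by_contra hbn
    exact hrelb.2 (by simpa [extLe, hni, hbn] using hrelb.1)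
  have hup : (⟨(b : ℕ), hbo⟩ : Fin n) ∈ upset le (A i) := by
    have h1 := hrelb.1
    simp only [extLe, hni, hbo, dif_pos, dif_neg, not_false_iff] at h1
    convert h1 using 3
    apply Fin.ext
    simp [Fin.natAdd]
  obtain ⟨a, haA, hab⟩ := hup
  have ha0 : 1 ≤ (a : ℕ) := by
    have h := hA0 i a haA
    simp [Fin.ext_iff] at h
    omega
  have hb0 : 1 ≤ (b : ℕ) := by
    by_contra h
    have he : (⟨(b : ℕ), hbo⟩ : Fin n) = ⟨0, by omega⟩ := by simp [Fin.ext_iff]; omega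
    rw [he] at hab
    exact absurd (has _ _ hab (hb.1 _)) (hA0 _ _ haA)
  have hhd₁ : l₁.head? = some ⟨1, by omega⟩ := by
    rw [← hdecomp, List.head?_append] at hhd
    rcases h : l₁.head? with _ | c
    · exact absurd (List.head?_eq_none_iff.1 h) hl₁ne
    · rw [h] at hhd
      simpa using hhd
  have hlen₁ : l₁.length = (d - 1) + 1 := by
    have hld : l₁.length = l.length - 1 := List.length_dropLast
    omega
  have hmem : (d - 1) ∈ depSet (extLe le A) ⟨1, by omega⟩ ((⟨(b : ℕ), hbo⟩ : Fin n).castAdd m) := by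
    refine ⟨l₁, hch₁, hhd₁, ?_, hlen₁⟩
    rw [hl₁last]
    rfl
  rw [depSet_castAdd hn hpo hb hA0 _ hb0] at hmem
  have h1 : d - 1 ≤ dep le ⟨1, by omega⟩ ⟨(b : ℕ), hbo⟩ := by
    rw [dep_eq_sSup]
    exact le_csSup (depSet_bddAbove le htr has _ _) hmem
  have h2 : dep le ⟨1, by omega⟩ (⟨(b : ℕ), hbo⟩ : Fin n) ≤ dep le ⟨1, by omega⟩ a :=
    dep_mono le htr has hab
  exact ⟨a, haA, by omega, by omega, by omega⟩

lemma new_dep_mem (hn : 2 ≤ n) (hpo : IsPartialOrder (Fin n) le)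
    (hb : Bounds le ⟨0, by omega⟩ ⟨1, by omega⟩)
    (hA0 : ∀ i, ∀ a ∈ A i, a ≠ ⟨0, by omega⟩)
    (i : Fin m) {a : Fin n} (haA : a ∈ A i) {k : ℕ}
    (hdk : dep le ⟨1, by omega⟩ a = k) :
    (k + 1) ∈ depSet (extLe le A) ⟨1, by omega⟩ (Fin.natAdd n i) := by
  have htr : ∀ a b c : Fin n, le a b → le b c → le a c :=
    fun a b c => hpo.toIsPreorder.toIsTrans.trans a b c
  have has : ∀ a b : Fin n, le a b → le b a → a = b :=
    fun a b => hpo.toAntisymm.antisymm a b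
  have hrefl : ∀ b : Fin n, le b b := fun b => hpo.toIsPreorder.toRefl.refl b
  have ha0 : 1 ≤ (a : ℕ) := by
    have h := hA0 i a haA
    simp [Fin.ext_iff] at h
    omega
  have hne : (depSet le ⟨1, by omega⟩ a).Nonempty := depSet_nonempty le (hb.2 a) hrefl
  have hkmem : k ∈ depSet le ⟨1, by omega⟩ a := by
    rw [← hdk, dep_eq_sSup]
    exact Nat.sSup_mem hne (depSet_bddAbove le htr has _ _)
  rw [← depSet_castAdd hn hpo hb hA0 a ha0] at hkmem
  obtain ⟨l, hch, hhd, hlast, hlen⟩ := hkmem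
  have hlne : l ≠ [] := by rintro rfl; simp at hlast
  have hni : ¬ ((Fin.natAdd n i : Fin (n + m)) : ℕ) < n := by
    simp [Fin.natAdd]
  have hrelai : extLe le A (Fin.natAdd n i) (a.castAdd m) := by
    simp only [extLe, hni, a.is_lt, Fin.coe_castAdd, dif_pos, dif_neg, not_false_iff]
    have hidx : ∀ (h : ((Fin.natAdd n i : Fin (n + m)) : ℕ) - n < m),
        (⟨((Fin.natAdd n i : Fin (n + m)) : ℕ) - n, h⟩ : Fin m) = i :=
      fun h => Fin.ext (by simp [Fin.natAdd])
    rw [hidx]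
    exact ⟨a, haA, hrefl a⟩
  refine ⟨l ++ [Fin.natAdd n i], ?_, ?_, ?_, ?_⟩
  · rw [List.Chain', List.isChain_append]
    refine ⟨hch, List.isChain_singleton _, ?_⟩
    intro p hp q hq
    simp only [List.head?_cons, Option.mem_def, Option.some.injEq] at hq
    subst hq
    rw [hlast] at hp
    simp only [Option.mem_def, Option.some.injEq] at hp
    subst hp
    refine ⟨hrelai, ?_⟩
    intro e
    have := congrArg Fin.val e
    simp [Fin.natAdd] at this
    have := a.is_lt
    omega
  · rw [List.head?_append, hhd]; rfl
  · rw [List.getLast?_concat]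
  · simp [hlen]

end Ext

set_option maxHeartbeats 2000000 in
/-- the poset obtained by adding `m` new atoms with covering sets `A i` is
levellised with the stated depths iff every `A i` meets the `k`-th level. -/
theorem statement6 {n m : ℕ} (hn : 2 ≤ n) (hm : 1 ≤ m)
    (le : Fin n → Fin n → Prop) (hpo : IsPartialOrder (Fin n) le)
    (hb : Bounds le ⟨0, by omega⟩ ⟨1, by omega⟩)
    (hlev : Levellised le ⟨1, by omega⟩)
    (k : ℕ) (hk : dep le ⟨1, by omega⟩ ⟨n - 1, by omega⟩ = k)
    (A : Fin m → Set (Fin n)) (hA0 : ∀ i, ∀ a ∈ A i, a ≠ ⟨0, by omega⟩) :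
    (Levellised (extLe le A) ⟨1, by omega⟩ ∧
      (∀ a : Fin n, 1 ≤ (a : ℕ) →
        dep (extLe le A) ⟨1, by omega⟩ (Fin.castAdd m a) = dep le ⟨1, by omega⟩ a ∧
        dep le ⟨1, by omega⟩ a ≤ k) ∧
      (∀ i : Fin m, dep (extLe le A) ⟨1, by omega⟩ (Fin.natAdd n i) = k + 1)) ↔
    ∀ i : Fin m, (A i ∩ lev le ⟨1, by omega⟩ k).Nonempty := by
  have htr : ∀ a b c : Fin n, le a b → le b c → le a c :=
    fun a b c => hpo.toIsPreorder.toIsTrans.trans a b c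
  have has : ∀ a b : Fin n, le a b → le b a → a = b :=
    fun a b => hpo.toAntisymm.antisymm a b
  have hxtr := extLe_trans (A := A) hn hpo hb hA0
  have hxas := extLe_antisymm (A := A) hn hpo hb hA0
  have hdepk : ∀ a : Fin n, 1 ≤ (a : ℕ) → dep le ⟨1, by omega⟩ a ≤ k := by
    intro a ha
    have h := hlev a ⟨n - 1, by omega⟩ ha (by simp; omega)
    rwa [hk] at h
  have hnew_iff : ∀ i : Fin m,
      (dep (extLe le A) ⟨1, by omega⟩ (Fin.natAdd n i) = k + 1 ↔
        (A i ∩ lev le ⟨1, by omega⟩ k).Nonempty) := by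
    intro i
    constructor
    · intro h
      have hne : (depSet (extLe le A) ⟨1, by omega⟩ (Fin.natAdd n i)).Nonempty := by
        rw [Set.nonempty_iff_ne_empty]
        intro he
        rw [dep_eq_sSup, he, csSup_empty] at h
        simp at h
      have hmem : k + 1 ∈ depSet (extLe le A) ⟨1, by omega⟩ (Fin.natAdd n i) := by
        rw [← h, dep_eq_sSup]
        exact Nat.sSup_mem hne (depSet_bddAbove _ hxtr hxas _ _)
      obtain ⟨a, haA, -, -, hge⟩ := new_chain_bound hn hpo hb hA0 i hmem
      refine ⟨a, haA, ?_⟩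
      have hle := hdepk a (by
        have hh := hA0 i a haA
        simp [Fin.ext_iff] at hh
        omega)
      show dep le ⟨1, by omega⟩ a = k
      omega
    · rintro ⟨a, haA, hak⟩
      have hak' : dep le ⟨1, by omega⟩ a = k := hak
      have hmem := new_dep_mem hn hpo hb hA0 i haA hak'
      have hub : dep (extLe le A) ⟨1, by omega⟩ (Fin.natAdd n i) ≤ k + 1 := by
        rw [dep_eq_sSup]
        refine csSup_le' (fun d hd => ?_)
        obtain ⟨a', haA', -, hle, -⟩ := new_chain_bound hn hpo hb hA0 i hd
        have := hdepk a' (by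
          have hh := hA0 i a' haA'
          simp [Fin.ext_iff] at hh
          omega)
        omega
      have hlb : k + 1 ≤ dep (extLe le A) ⟨1, by omega⟩ (Fin.natAdd n i) := by
        rw [dep_eq_sSup]
        exact le_csSup (depSet_bddAbove _ hxtr hxas _ _) hmem
      omega
  constructor
  · rintro ⟨-, -, h3⟩ i
    exact (hnew_iff i).1 (h3 i)
  · intro h
    have h3 : ∀ i : Fin m, dep (extLe le A) ⟨1, by omega⟩ (Fin.natAdd n i) = k + 1 :=
      fun i => (hnew_iff i).2 (h i)
    have h2 : ∀ a : Fin n, 1 ≤ (a : ℕ) →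
        dep (extLe le A) ⟨1, by omega⟩ (Fin.castAdd m a) = dep le ⟨1, by omega⟩ a ∧
        dep le ⟨1, by omega⟩ a ≤ k :=
      fun a ha => ⟨dep_castAdd hn hpo hb hA0 a ha, hdepk a ha⟩
    refine ⟨?_, h2, h3⟩
    intro i j hi hij
    by_cases hj : (j : ℕ) < n
    · have hi' : (i : ℕ) < n := by omega
      have hei : i = Fin.castAdd m ⟨(i : ℕ), hi'⟩ := Fin.ext rfl
      have hej : j = Fin.castAdd m ⟨(j : ℕ), hj⟩ := Fin.ext rfl
      rw [hei, hej, dep_castAdd hn hpo hb hA0 ⟨(i : ℕ), hi'⟩ hi,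
        dep_castAdd hn hpo hb hA0 ⟨(j : ℕ), hj⟩ (le_trans hi hij : (1 : ℕ) ≤ (j : ℕ))]
      exact hlev _ _ hi hij
    · have hj' : (j : ℕ) - n < m := by have := j.isLt; omega
      have hej : j = Fin.natAdd n ⟨(j : ℕ) - n, hj'⟩ := Fin.ext (by simp [Fin.natAdd]; omega)
      rw [hej, h3]
      by_cases hio : (i : ℕ) < n
      · have hei : i = Fin.castAdd m ⟨(i : ℕ), hio⟩ := Fin.ext rfl
        rw [hei, dep_castAdd hn hpo hb hA0 ⟨(i : ℕ), hio⟩ hi]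
        have := hdepk ⟨(i : ℕ), hio⟩ hi
        omega
      · have hi'' : (i : ℕ) - n < m := by have := i.isLt; omega
        have hei : i = Fin.natAdd n ⟨(i : ℕ) - n, hi''⟩ := Fin.ext (by simp [Fin.natAdd]; omega)
        rw [hei, h3]


end PaperLattice
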